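/- Let 𝒢 = (G, o, R_1, …, R_n) be a functional Menger system of rank n and let H ⊆ G be a quasi-stable l-unitary normal v-complex with R_i H ⊆ H for every i ∈ {1,…,n}. Then for every m ∈ ℕ and every i ∈ {1,…,n}: R_i(C_H^m(H)) ⊆ H. Consequently R_i(C_H[H]) ⊆ H. -/
import Mathlib


universe u

/-- A functional Menger system of rank `n`: an `(n+1)`-ary operation `o`
(written `x[y₁…yₙ]` in the paper) and `n` unary operations `R i`,
satisfying axioms A1–A7. -/
structure MengerSystem (n : ℕ) (G : Type u) where
  o : G → (Fin n → G) → G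
  R : Fin n → G → G
  A1 : ∀ (x : G) (y z : Fin n → G),
    o (o x y) z = o x fun i => o (y i) z
  A2 : ∀ x : G, o x (fun i => R i x) = x
  A3 : ∀ (x : G) (u : Fin n → G) (i : Fin n) (z y : G),
    o (o x (Function.update u i z)) (fun j => R j y)
      = o x (Function.update u i (o z fun j => R j y))
  A4 : ∀ (i : Fin n) (x y : G),
    R i (o x fun j => R j y) = o (R i x) fun j => R j y
  A5 : ∀ (x y z : G),
    o (o x fun j => R j y) (fun j => R j z)
      = o (o x fun j => R j z) (fun j => R j y)
  A6 : ∀ (i k : Fin n) (x : G) (y : Fin n → G),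
    R i (o x y) = R i (o (R k x) y)
  A7 : ∀ (i : Fin n) (x : G) (y : Fin n → G),
    o (R i x) y = o (y i) fun j => R j (o x y)

namespace MengerSystem

variable {n : ℕ} {G : Type u}

/-- `T_n(G)`: the least set of transformations of `G` containing the identity and
closed under `t ↦ (x ↦ a[b̄|ᵢ t x])` and `t ↦ (x ↦ Rᵢ (t x))`. -/
inductive IsTn (M : MengerSystem n G) : (G → G) → Prop
  | id : IsTn M id
  | op (t : G → G) (a : G) (b : Fin n → G) (i : Fin n) :
      IsTn M t → IsTn M fun x => M.o a (Function.update b i (t x))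
  | proj (t : G → G) (i : Fin n) :
      IsTn M t → IsTn M fun x => M.R i (t x)

/-- quasi-stable: `x ∈ H → x[x…x] ∈ H`. -/
def QuasiStable (M : MengerSystem n G) (H : Set G) : Prop :=
  ∀ x ∈ H, M.o x (fun _ => x) ∈ H

/-- l-unitary: `x[y…y] ∈ H ∧ y ∈ H → x ∈ H`. -/
def LUnitary (M : MengerSystem n G) (H : Set G) : Prop :=
  ∀ x y : G, M.o x (fun _ => y) ∈ H → y ∈ H → x ∈ H

/-- normal v-complex: `x, y ∈ H ∧ t x ∈ H → t y ∈ H` for all `t ∈ T_n(G)`. -/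
def NormalVComplex (M : MengerSystem n G) (H : Set G) : Prop :=
  ∀ t : G → G, M.IsTn t → ∀ x ∈ H, ∀ y ∈ H, t x ∈ H → t y ∈ H

/-- stable: `x, y₁, …, yₙ ∈ H → x[y₁…yₙ] ∈ H`. -/
def Stable (M : MengerSystem n G) (H : Set G) : Prop :=
  ∀ (x : G) (y : Fin n → G), x ∈ H → (∀ i, y i ∈ H) → M.o x y ∈ H

/-- v-unitary: `x[y₁…yₙ] ∈ H ∧ y₁, …, yₙ ∈ H → x ∈ H`. -/
def VUnitary (M : MengerSystem n G) (H : Set G) : Prop :=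
  ∀ (x : G) (y : Fin n → G), M.o x y ∈ H → (∀ i, y i ∈ H) → x ∈ H

/-- l-ideal: `x[y₁…yₙ] ∈ H` whenever some `yᵢ ∈ H`. -/
def LIdeal (M : MengerSystem n G) (H : Set G) : Prop :=
  ∀ (x : G) (y : Fin n → G), (∃ i, y i ∈ H) → M.o x y ∈ H

/-- the order `x ≤ y ↔ x = y[R₁x…Rₙx]` (the relation ζ). -/
def le (M : MengerSystem n G) (x y : G) : Prop :=
  x = M.o y fun i => M.R i x

/-- the quasi-order `x ⊏ y ↔ R₁x ≤ R₁y` (the relation χ). -/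
def sub (M : MengerSystem n G) [NeZero n] (x y : G) : Prop :=
  M.le (M.R 0 x) (M.R 0 y)

/-- v-regular binary relation. -/
def VRegular (M : MengerSystem n G) (ρ : G → G → Prop) : Prop :=
  ∀ (z : G) (x y : Fin n → G), (∀ i, ρ (x i) (y i)) → ρ (M.o z x) (M.o z y)

end MengerSystem

/-- An `n`-place function on `A`: a partial map from `Aⁿ` to `A`. -/
def NPlace (n : ℕ) (A : Type u) : Type u := (Fin n → A) → Part A

namespace NPlace

variable {n : ℕ} {A : Type u}

/-- Menger composition `f[g₁…gₙ]` of `n`-place functions. -/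
def comp (f : NPlace n A) (g : Fin n → NPlace n A) : NPlace n A :=
  fun a =>
    (⟨∀ i, (g i a).Dom, fun h i => (g i a).get (h i)⟩ : Part (Fin n → A)).bind f

/-- `Rᵢ f`: same domain as `f`, value `(Rᵢ f)(a₁,…,aₙ) = aᵢ`. -/
def Ri (i : Fin n) (f : NPlace n A) : NPlace n A :=
  fun a => (f a).map fun _ => a i

/-- Set-theoretic intersection of two `n`-place functions (as sets of pairs). -/
def inter (f g : NPlace n A) : NPlace n A :=
  fun a => ⟨(f a).Dom ∧ f a = g a, fun h => (f a).get h.1⟩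

end NPlace

/-- A representation of a functional Menger system by `n`-place functions. -/
def MengerSystem.IsRep {n : ℕ} {G : Type u} (M : MengerSystem n G) {A : Type u}
    (P : G → NPlace n A) : Prop :=
  (∀ (x : G) (y : Fin n → G), P (M.o x y) = NPlace.comp (P x) fun i => P (y i)) ∧
  (∀ (i : Fin n) (x : G), P (M.R i x) = NPlace.Ri i (P x))

/-- A nonempty `H ⊆ G` is a stabilizer of `M` if there are a representation `P`
on some set `A` and a point `a ∈ A` with `H = {g | P g (a,…,a) = a}`. -/
def MengerSystem.IsStabilizer {n : ℕ} {G : Type u} (M : MengerSystem n G)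
    (H : Set G) : Prop :=
  ∃ (A : Type u) (P : G → NPlace n A) (a : A),
    M.IsRep P ∧ H = {g : G | a ∈ P g fun _ => a}

/-- The operator `C_H`: `c ∈ C_H(X)` iff there are `a, b, t` with
`(a ≤ b ∨ a, b ∈ H)`, `t a ⊏ c`, `a ∈ X` and `t b ∈ X`. -/
def MengerSystem.CH {n : ℕ} {G : Type u} [NeZero n] (M : MengerSystem n G)
    (H X : Set G) : Set G :=
  {c | ∃ (a b : G) (t : G → G), M.IsTn t ∧ (M.le a b ∨ (a ∈ H ∧ b ∈ H)) ∧
    M.sub (t a) c ∧ a ∈ X ∧ t b ∈ X}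

/-- Iterates `C_H^m(X)`. -/
def MengerSystem.CHiter {n : ℕ} {G : Type u} [NeZero n] (M : MengerSystem n G)
    (H X : Set G) : ℕ → Set G
  | 0 => X
  | m + 1 => M.CH H (M.CHiter H X m)

/-- `C_H[X] = ⋃ₘ C_H^m(X)`. -/
def MengerSystem.CHcl {n : ℕ} {G : Type u} [NeZero n] (M : MengerSystem n G)
    (H X : Set G) : Set G :=
  ⋃ m : ℕ, M.CHiter H X m

/-- Transformations in `T_n(G)` commute with `x ↦ x[R₁y…Rₙy]`. -/
theorem MengerSystem.tn_comm {n : ℕ} {G : Type u} (M : MengerSystem n G)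
    {t : G → G} (ht : M.IsTn t) (x y : G) :
    t (M.o x fun j => M.R j y) = M.o (t x) fun j => M.R j y := by
  induction ht with
  | id => rfl
  | op t' a b i _ ih =>
    simp only [ih]
    exact (M.A3 a b i (t' x) y).symm
  | proj t' i _ ih =>
    simp only [ih]
    exact M.A4 i (t' x) y

/-- `Rᵢ(Rₖx) = (Rᵢx)[R₁(Rₖx)…Rₙ(Rₖx)]`. -/
theorem MengerSystem.R_R {n : ℕ} {G : Type u} (M : MengerSystem n G)
    (i k : Fin n) (x : G) :
    M.R i (M.R k x) = M.o (M.R i x) fun j => M.R j (M.R k x) := by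
  conv_lhs => rw [← M.A2 (M.R k x)]
  rw [← M.A6 i k x, M.A4]

/-- A quasi-stable normal v-complex is stable. -/
theorem MengerSystem.stable_of {n : ℕ} {G : Type u} (M : MengerSystem n G) (H : Set G)
    (hqs : M.QuasiStable H) (hnc : M.NormalVComplex H) : M.Stable H := by
  intro x y hx hy
  have key : ∀ k : ℕ, k ≤ n → M.o x (fun i => if (i : ℕ) < k then y i else x) ∈ H := by
    intro k
    induction k with
    | zero =>
      intro _
      simpa using hqs x hx
    | succ k ih =>
      intro hk
      have hkn : k < n := hk
      set kf : Fin n := ⟨k, hkn⟩ with hkf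
      set u : Fin n → G := fun i => if (i : ℕ) < k then y i else x with hudef
      have hu : M.o x u ∈ H := ih (le_of_lt hkn)
      have ht : M.IsTn (fun z => M.o x (Function.update u kf z)) :=
        MengerSystem.IsTn.op id x u kf MengerSystem.IsTn.id
      have hukf : u kf = x := by simp [hudef, hkf]
      have hself : Function.update u kf x = u := by
        rw [← hukf]; exact Function.update_eq_self kf u
      have htx : M.o x (Function.update u kf x) ∈ H := by
        rw [hself]; exact hu
      have hty := hnc _ ht x hx (y kf) (hy kf) htx
      have heq : Function.update u kf (y kf)
          = fun i : Fin n => if (i : ℕ) < k + 1 then y i else x := by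
        funext i
        by_cases hik : i = kf
        · subst hik; simp [hkf]
        · have hiv : (i : ℕ) ≠ k := fun h => hik (Fin.ext (by simp [hkf, h]))
          rw [Function.update_of_ne hik]
          simp only [hudef]
          by_cases h2 : (i : ℕ) < k
          · rw [if_pos h2, if_pos (by omega)]
          · rw [if_neg h2, if_neg (by omega)]
      rwa [heq] at hty
  have hfin := key n le_rfl
  have heq : (fun i : Fin n => if (i : ℕ) < n then y i else x) = y := by
    funext i; simp [i.isLt]
  rwa [heq] at hfin

/-- An l-unitary normal v-complex is v-unitary. -/
theorem MengerSystem.vunitary_of {n : ℕ} {G : Type u} [NeZero n] (M : MengerSystem n G)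
    (H : Set G) (hlu : M.LUnitary H) (hnc : M.NormalVComplex H) : M.VUnitary H := by
  intro x y hxy hy
  have key : ∀ k : ℕ, k ≤ n → M.o x (fun i => if (i : ℕ) < k then y 0 else y i) ∈ H := by
    intro k
    induction k with
    | zero =>
      intro _
      simpa using hxy
    | succ k ih =>
      intro hk
      have hkn : k < n := hk
      set kf : Fin n := ⟨k, hkn⟩ with hkf
      set u : Fin n → G := fun i => if (i : ℕ) < k then y 0 else y i with hudef
      have hu : M.o x u ∈ H := ih (le_of_lt hkn)
      have ht : M.IsTn (fun z => M.o x (Function.update u kf z)) :=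
        MengerSystem.IsTn.op id x u kf MengerSystem.IsTn.id
      have hukf : u kf = y kf := by simp [hudef, hkf]
      have hself : Function.update u kf (y kf) = u := by
        rw [← hukf]; exact Function.update_eq_self kf u
      have htx : M.o x (Function.update u kf (y kf)) ∈ H := by
        rw [hself]; exact hu
      have hty := hnc _ ht (y kf) (hy kf) (y 0) (hy 0) htx
      have heq : Function.update u kf (y 0)
          = fun i : Fin n => if (i : ℕ) < k + 1 then y 0 else y i := by
        funext i
        by_cases hik : i = kf
        · subst hik; simp [hkf]
        · have hiv : (i : ℕ) ≠ k := fun h => hik (Fin.ext (by simp [hkf, h]))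
          rw [Function.update_of_ne hik]
          simp only [hudef]
          by_cases h2 : (i : ℕ) < k
          · rw [if_pos h2, if_pos (by omega)]
          · rw [if_neg h2, if_neg (by omega)]
      rwa [heq] at hty
  have hfin := key n le_rfl
  have heq : (fun i : Fin n => if (i : ℕ) < n then y 0 else y i) = fun _ => y 0 := by
    funext i; simp [i.isLt]
  rw [heq] at hfin
  exact hlu x (y 0) hfin (hy 0)

/-- For a quasi-stable l-unitary normal v-complex `H` with `Rᵢ H ⊆ H`:
`Rᵢ (C_H^m(H)) ⊆ H` for every `m`, and consequently `Rᵢ (C_H[H]) ⊆ H`. -/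
theorem Ri_CHiter_subset {n : ℕ} {G : Type u} [NeZero n] (M : MengerSystem n G)
    (H : Set G)
    (hqs : M.QuasiStable H) (hlu : M.LUnitary H) (hnc : M.NormalVComplex H)
    (hRH : ∀ i : Fin n, ∀ x ∈ H, M.R i x ∈ H) :
    (∀ (m : ℕ) (i : Fin n), ∀ x ∈ M.CHiter H H m, M.R i x ∈ H) ∧
    (∀ i : Fin n, ∀ x ∈ M.CHcl H H, M.R i x ∈ H) := by
  have hst := M.stable_of H hqs hnc
  have hvu := M.vunitary_of H hlu hnc
  have main : ∀ (m : ℕ) (i : Fin n), ∀ x ∈ M.CHiter H H m, M.R i x ∈ H := by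
    intro m
    induction m with
    | zero => exact fun i x hx => hRH i x hx
    | succ m ih =>
      intro i c hc
      obtain ⟨a, b, t, ht, hab, hsub, haX, htbX⟩ := hc
      have hta : ∀ j : Fin n, M.R j (t a) ∈ H := by
        intro j
        rcases hab with hle | ⟨haH, hbH⟩
        · have h1 : t a = M.o (t b) fun j => M.R j a := by
            conv_lhs => rw [hle]
            exact M.tn_comm ht b a
          rw [h1, M.A4]
          exact hst _ _ (ih j _ htbX) (fun k => ih k a haX)
        · exact hnc _ (MengerSystem.IsTn.proj t j ht) b hbH a haH (ih j _ htbX)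
      have hw : M.R 0 (t a) ∈ H := hta 0
      have h0c : M.R 0 c ∈ H := by
        refine hvu (M.R 0 c) (fun j => M.R j (M.R 0 (t a))) ?_ (fun j => hRH j _ hw)
        exact hsub ▸ hw
      refine hvu (M.R i c) (fun j => M.R j (M.R 0 c)) ?_ (fun j => hRH j _ h0c)
      rw [← M.R_R i 0 c]
      exact hRH i _ h0c
  refine ⟨main, ?_⟩
  intro i x hx
  obtain ⟨m, hm⟩ := Set.mem_iUnion.mp hx
  exact main m i x hm
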